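/- Let G be a topological group acting continuously by linear isometries on Banach spaces X and Y, and suppose there exists x₀ in the closed unit ball of X such that the closed convex hull of the orbit G·x₀ equals the whole closed unit ball B_X. Then every G-equivariant bounded linear operator T : X → Y attains its norm at x₀, i.e., ‖T(x₀)‖ = ‖T‖. -/

import Mathlib

/-- if `x₀` is a big point (the closed convex hull of its `G`-orbit is
the whole closed unit ball), then every `G`-equivariant bounded linear operator
attains its norm at `x₀`. -/
theorem stmt14 {G X Y : Type*} [Group G] [TopologicalSpace G] [IsTopologicalGroup G]
    [NormedAddCommGroup X] [NormedSpace ℝ X] [CompleteSpace X]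
    [NormedAddCommGroup Y] [NormedSpace ℝ Y] [CompleteSpace Y]
    [MulAction G X] [ContinuousSMul G X] [MulAction G Y] [ContinuousSMul G Y]
    (hlinX : ∀ g : G, IsLinearMap ℝ (fun x : X => g • x))
    (hnormX : ∀ (g : G) (x : X), ‖g • x‖ = ‖x‖)
    (hlinY : ∀ g : G, IsLinearMap ℝ (fun y : Y => g • y))
    (hnormY : ∀ (g : G) (y : Y), ‖g • y‖ = ‖y‖)
    (x₀ : X) (hx₀ball : ‖x₀‖ ≤ 1)
    (hbig : closure (convexHull ℝ (Set.range fun g : G => g • x₀)) =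
      Metric.closedBall (0 : X) 1)
    (T : X →L[ℝ] Y) (hT : ∀ (g : G) (x : X), T (g • x) = g • T x) :
    ‖T x₀‖ = ‖T‖ := by
  set c := ‖T x₀‖ with hc
  have hS : Metric.closedBall (0 : X) 1 ⊆ T ⁻¹' Metric.closedBall (0 : Y) c := by
    rw [← hbig]
    apply closure_minimal
    · apply convexHull_min
      · rintro _ ⟨g, rfl⟩
        simp only [Set.mem_preimage, Metric.mem_closedBall, dist_zero_right]
        rw [hT, hnormY]
      · exact (convex_closedBall (0 : Y) c).linear_preimage (T : X →ₗ[ℝ] Y)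
    · exact (Metric.isClosed_closedBall).preimage T.continuous
  have hle : ‖T‖ ≤ c := by
    apply T.opNorm_le_bound (norm_nonneg _)
    intro x
    rcases eq_or_ne x 0 with rfl | hx
    · simpa using mul_nonneg (norm_nonneg (T x₀)) (norm_nonneg (0:X))
    · have hxn : (0 : ℝ) < ‖x‖ := norm_pos_iff.mpr hx
      have hmem : (‖x‖⁻¹ : ℝ) • x ∈ Metric.closedBall (0 : X) 1 := by
        simp only [Metric.mem_closedBall, dist_zero_right, norm_smul, norm_inv,
          norm_norm]
        rw [inv_mul_cancel₀ hxn.ne']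
      have := hS hmem
      simp only [Set.mem_preimage, Metric.mem_closedBall, dist_zero_right,
        map_smul, norm_smul, norm_inv, norm_norm] at this
      calc ‖T x‖ = ‖x‖ * (‖x‖⁻¹ * ‖T x‖) := by field_simp
        _ ≤ ‖x‖ * c := by nlinarith
        _ = c * ‖x‖ := mul_comm _ _
  have hge : c ≤ ‖T‖ := by
    calc c = ‖T x₀‖ := rfl
      _ ≤ ‖T‖ * ‖x₀‖ := T.le_opNorm x₀
      _ ≤ ‖T‖ * 1 := by gcongr
      _ = ‖T‖ := mul_one _
  linarith
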